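/- Let λ < κ be infinite cardinals and let Y be the quotient of the disjoint union of 2^κ and 2^λ obtained by identifying the two all-zero sequences to a single point p. If λ < cf(κ) then Nt(Y) = κ⁺, and if λ ≥ cf(κ) then Nt(Y) = κ. -/

import Mathlib

open Cardinal TopologicalSpace

/-- The Noetherian type of `X`: the least infinite `μ` such that `X` has a base in
which no member is (strictly) contained in `μ`-many members. -/
noncomputable def noetherianType (X : Type u) [TopologicalSpace X] : Cardinal.{u} :=
  sInf {c | ℵ₀ ≤ c ∧ ∃ B : Set (Set X), IsTopologicalBasis B ∧
    ∀ u ∈ B, #{v : Set X // v ∈ B ∧ u ⊂ v} < c}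

/-- The equivalence relation on `2^K ⊕ 2^L` identifying the two all-zero (all-`false`)
sequences to a single point and nothing else. -/
def glueZeroSetoid (K L : Type u) : Setoid ((K → Bool) ⊕ (L → Bool)) where
  r x y := x = y ∨
    ((x = Sum.inl (fun _ => false) ∨ x = Sum.inr (fun _ => false)) ∧
     (y = Sum.inl (fun _ => false) ∨ y = Sum.inr (fun _ => false)))
  iseqv := by
    constructor
    · intro x; exact Or.inl rfl
    · rintro x y (rfl | ⟨h₁, h₂⟩)
      · exact Or.inl rfl
      · exact Or.inr ⟨h₂, h₁⟩
    · rintro x y z (rfl | ⟨h₁, h₂⟩) h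
      · exact h
      · rcases h with rfl | ⟨h₃, h₄⟩
        · exact Or.inr ⟨h₁, h₂⟩
        · exact Or.inr ⟨h₁, h₄⟩

/-- The quotient of the disjoint union of `2^K` and `2^L` identifying the two all-zero
sequences; it carries the quotient topology of the sum of the product topologies. -/
def GlueSpace (K L : Type u) : Type u := Quotient (glueZeroSetoid K L)

instance (K L : Type u) : TopologicalSpace (GlueSpace K L) :=
  instTopologicalSpaceQuotient

namespace GlueAux

variable {K L : Type u}

/-- all-zero sequence -/
def zz {α : Type u} : α → Bool := fun _ => false

/-- generic cylinder: zero on `s₀`, one on `s₁` -/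
def cyl {α : Type u} (s₀ s₁ : Finset α) : Set (α → Bool) :=
  {x | (∀ i ∈ s₀, x i = false) ∧ (∀ i ∈ s₁, x i = true)}

open scoped Classical in
/-- indicator -/
noncomputable def ind {α : Type u} (t : Finset α) : α → Bool := fun i => decide (i ∈ t)

lemma ind_mem_cyl {α : Type u} {s₀ s₁ t : Finset α} (h1 : ∀ i ∈ s₀, i ∉ t)
    (h2 : s₁ ⊆ t) : ind t ∈ cyl s₀ s₁ := by
  constructor
  · intro i hi; simpa [ind] using h1 i hi
  · intro i hi; simpa [ind] using h2 hi

lemma zz_mem_cyl {α : Type u} {s₀ s₁ : Finset α} : zz ∈ cyl s₀ s₁ ↔ s₁ = ∅ := by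
  constructor
  · rintro ⟨-, h2⟩
    refine Finset.eq_empty_iff_forall_notMem.2 fun i hi => ?_
    simpa [zz] using h2 i hi
  · rintro rfl
    exact ⟨fun i _ => rfl, by simp⟩

lemma isOpen_cyl {α : Type u} (s₀ s₁ : Finset α) : IsOpen (cyl s₀ s₁) := by
  have : cyl s₀ s₁ = ((↑s₀ : Set α).pi fun _ => ({false} : Set Bool)) ∩
      ((↑s₁ : Set α).pi fun _ => ({true} : Set Bool)) := by
    ext x; simp [cyl, Set.mem_pi]
  rw [this]
  exact (isOpen_set_pi s₀.finite_toSet fun _ _ => isOpen_discrete _).inter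
    (isOpen_set_pi s₁.finite_toSet fun _ _ => isOpen_discrete _)

lemma exists_cyl_subset {α : Type u} {A : Set (α → Bool)} (hA : IsOpen A) {x : α → Bool}
    (hx : x ∈ A) : ∃ s₀ s₁ : Finset α, x ∈ cyl s₀ s₁ ∧ cyl s₀ s₁ ⊆ A := by
  classical
  obtain ⟨I, u, hu, hsub⟩ := isOpen_pi_iff.1 hA x hx
  refine ⟨I.filter (fun i => x i = false), I.filter (fun i => x i = true), ?_, ?_⟩
  · constructor <;> intro i hi <;> simpa using (Finset.mem_filter.1 hi).2
  · intro y hy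
    apply hsub
    intro i hi
    have hi' : i ∈ I := hi
    have hyx : y i = x i := by
      rcases Bool.eq_false_or_eq_true (x i) with h | h
      · have := hy.2 i (Finset.mem_filter.2 ⟨hi', h⟩); rw [this, h]
      · have := hy.1 i (Finset.mem_filter.2 ⟨hi', h⟩); rw [this, h]
    rw [hyx]; exact (hu i hi').2

lemma exists_zcyl_subset {α : Type u} {A : Set (α → Bool)} (hA : IsOpen A)
    (hx : zz ∈ A) : ∃ F : Finset α, cyl F ∅ ⊆ A := by
  obtain ⟨s₀, s₁, hmem, hsub⟩ := exists_cyl_subset hA hx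
  rcases zz_mem_cyl.1 hmem with rfl
  exact ⟨s₀, hsub⟩

lemma cyl_anti {α : Type u} {F F' : Finset α} (h : F' ⊆ F) : cyl F ∅ ⊆ cyl F' ∅ :=
  fun x hx => ⟨fun i hi => hx.1 i (h hi), by simp⟩

/-- the quotient map -/
def q : (K → Bool) ⊕ (L → Bool) → GlueSpace K L := Quotient.mk (glueZeroSetoid K L)

lemma q_surjective : Function.Surjective (q : _ → GlueSpace K L) :=
  Quotient.exists_rep

lemma q_eq_iff {a b : (K → Bool) ⊕ (L → Bool)} : q a = q b ↔ (a = b ∨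
    ((a = Sum.inl zz ∨ a = Sum.inr zz) ∧ (b = Sum.inl zz ∨ b = Sum.inr zz))) :=
  Quotient.eq (r := glueZeroSetoid K L)

/-- the glue point -/
def pt (K L : Type u) : GlueSpace K L := q (Sum.inl zz)

lemma isOpen_glue_iff {W : Set (GlueSpace K L)} : IsOpen W ↔ IsOpen (q ⁻¹' W) :=
  Iff.rfl

/-- glued set -/
def j (A : Set (K → Bool)) (B : Set (L → Bool)) : Set (GlueSpace K L) :=
  q '' (Sum.inl '' A ∪ Sum.inr '' B)

/-- saturation condition -/
def Sat (A : Set (K → Bool)) (B : Set (L → Bool)) : Prop := zz ∈ A ↔ zz ∈ B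

lemma preimage_j {A : Set (K → Bool)} {B : Set (L → Bool)} (h : Sat A B) :
    q ⁻¹' (j A B) = Sum.inl '' A ∪ Sum.inr '' B := by
  apply Set.Subset.antisymm
  · intro w hw
    obtain ⟨w', hw', hq⟩ := hw
    rcases q_eq_iff.1 hq.symm with rfl | ⟨hz1, hz2⟩
    · exact hw'
    · -- w' is a zero, w is a zero
      have hzz : zz ∈ A ∧ zz ∈ B := by
        rcases hz2 with rfl | rfl
        · rcases hw' with ⟨x, hx, hx'⟩ | ⟨t, ht, ht'⟩
          · obtain rfl : x = zz := Sum.inl.inj hx'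
            exact ⟨hx, h.1 hx⟩
          · exact absurd ht' (by simp)
        · rcases hw' with ⟨x, hx, hx'⟩ | ⟨t, ht, ht'⟩
          · exact absurd hx' (by simp)
          · obtain rfl : t = zz := Sum.inr.inj ht'
            exact ⟨h.2 ht, ht⟩
      rcases hz1 with rfl | rfl
      · exact Or.inl ⟨zz, hzz.1, rfl⟩
      · exact Or.inr ⟨zz, hzz.2, rfl⟩
  · intro w hw
    exact ⟨w, hw, rfl⟩

lemma isOpen_j {A : Set (K → Bool)} {B : Set (L → Bool)} (hA : IsOpen A) (hB : IsOpen B)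
    (h : Sat A B) : IsOpen (j A B) := by
  rw [isOpen_glue_iff, preimage_j h, isOpen_sum_iff]
  constructor
  · have : Sum.inl ⁻¹' (Sum.inl '' A ∪ Sum.inr '' B : Set ((K → Bool) ⊕ (L → Bool))) = A := by
      ext x; simp
    rw [this]; exact hA
  · have : Sum.inr ⁻¹' (Sum.inl '' A ∪ Sum.inr '' B : Set ((K → Bool) ⊕ (L → Bool))) = B := by
      ext x; simp
    rw [this]; exact hB

lemma mem_j_inl {A : Set (K → Bool)} {B : Set (L → Bool)} (h : Sat A B) {x : K → Bool} :
    q (Sum.inl x) ∈ j A B ↔ x ∈ A := by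
  rw [← Set.mem_preimage, preimage_j h]
  simp

lemma mem_j_inr {A : Set (K → Bool)} {B : Set (L → Bool)} (h : Sat A B) {t : L → Bool} :
    q (Sum.inr t) ∈ j A B ↔ t ∈ B := by
  rw [← Set.mem_preimage, preimage_j h]
  simp

lemma pt_mem_j {A : Set (K → Bool)} {B : Set (L → Bool)} (h : Sat A B) :
    pt K L ∈ j A B ↔ zz ∈ A :=
  mem_j_inl h

lemma inl_mem_j {A : Set (K → Bool)} {B : Set (L → Bool)} {x : K → Bool} (hx : x ∈ A) :
    q (Sum.inl x) ∈ j A B :=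
  ⟨Sum.inl x, Or.inl ⟨x, hx, rfl⟩, rfl⟩

lemma inr_mem_j {A : Set (K → Bool)} {B : Set (L → Bool)} {t : L → Bool} (ht : t ∈ B) :
    q (Sum.inr t) ∈ j A B :=
  ⟨Sum.inr t, Or.inr ⟨t, ht, rfl⟩, rfl⟩

lemma j_subset_iff {A : Set (K → Bool)} {B : Set (L → Bool)} {v : Set (GlueSpace K L)} :
    j A B ⊆ v ↔ (∀ x ∈ A, q (Sum.inl x) ∈ v) ∧ (∀ t ∈ B, q (Sum.inr t) ∈ v) := by
  constructor
  · intro hsub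
    exact ⟨fun x hx => hsub (inl_mem_j hx), fun t ht => hsub (inr_mem_j ht)⟩
  · rintro ⟨h1, h2⟩ y hy
    obtain ⟨w, hw, rfl⟩ := hy
    rcases hw with ⟨x, hx, rfl⟩ | ⟨t, ht, rfl⟩
    · exact h1 x hx
    · exact h2 t ht

lemma j_subset_j_iff {A A' : Set (K → Bool)} {B B' : Set (L → Bool)} (h' : Sat A' B') :
    j A B ⊆ j A' B' ↔ A ⊆ A' ∧ B ⊆ B' := by
  rw [j_subset_iff]
  constructor
  · rintro ⟨h1, h2⟩
    exact ⟨fun x hx => (mem_j_inl h').1 (h1 x hx), fun t ht => (mem_j_inr h').1 (h2 t ht)⟩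
  · rintro ⟨h1, h2⟩
    exact ⟨fun x hx => inl_mem_j (h1 hx), fun t ht => inr_mem_j (h2 ht)⟩

lemma j_mono {A A' : Set (K → Bool)} {B B' : Set (L → Bool)} (h1 : A ⊆ A') (h2 : B ⊆ B') :
    j A B ⊆ j A' B' :=
  j_subset_iff.2 ⟨fun x hx => inl_mem_j (h1 hx), fun t ht => inr_mem_j (h2 ht)⟩

/-- every open set is a glued set of its traces -/
lemma open_eq_j {W : Set (GlueSpace K L)} (hW : IsOpen W) :
    W = j (Sum.inl ⁻¹' (q ⁻¹' W)) (Sum.inr ⁻¹' (q ⁻¹' W)) := by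
  have : (Sum.inl '' (Sum.inl ⁻¹' (q ⁻¹' W)) ∪ Sum.inr '' (Sum.inr ⁻¹' (q ⁻¹' W))) =
      q ⁻¹' W := by
    ext w; cases w <;> simp
  rw [j, this, Set.image_preimage_eq W q_surjective]

lemma sat_traces {W : Set (GlueSpace K L)} :
    Sat (Sum.inl ⁻¹' (q ⁻¹' W)) (Sum.inr ⁻¹' (q ⁻¹' W)) := by
  unfold Sat
  have : q (Sum.inl (zz : K → Bool)) = q (Sum.inr (zz : L → Bool)) := by
    rw [q_eq_iff]; exact Or.inr ⟨Or.inl rfl, Or.inr rfl⟩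
  simp only [Set.mem_preimage, this]

lemma eq_pt_iff_inl {x : K → Bool} : q (Sum.inl x) = pt K L ↔ x = zz := by
  rw [pt, q_eq_iff]
  constructor
  · rintro (h | ⟨h1, -⟩)
    · exact Sum.inl.inj h
    · rcases h1 with h | h
      · exact Sum.inl.inj h
      · exact absurd h (by simp)
  · rintro rfl; exact Or.inl rfl

lemma eq_pt_iff_inr {t : L → Bool} : q (Sum.inr t) = pt K L ↔ t = zz := by
  rw [pt, q_eq_iff]
  constructor
  · rintro (h | ⟨h1, -⟩)
    · exact absurd h (by simp)
    · rcases h1 with h | h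
      · exact absurd h (by simp)
      · exact Sum.inr.inj h
  · rintro rfl; exact Or.inr ⟨Or.inr rfl, Or.inl rfl⟩

lemma pt_mem_cases {y : GlueSpace K L} :
    (∃ x : K → Bool, y = q (Sum.inl x)) ∨ (∃ t : L → Bool, y = q (Sum.inr t)) := by
  obtain ⟨w, rfl⟩ := q_surjective y
  cases w with
  | inl x => exact Or.inl ⟨x, rfl⟩
  | inr t => exact Or.inr ⟨t, rfl⟩

lemma mem_j_elim {A : Set (K → Bool)} {B : Set (L → Bool)} {y : GlueSpace K L}
    (hy : y ∈ j A B) :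
    (∃ x ∈ A, y = q (Sum.inl x)) ∨ (∃ t ∈ B, y = q (Sum.inr t)) := by
  obtain ⟨w, hw, rfl⟩ := hy
  rcases hw with ⟨x, hx, rfl⟩ | ⟨t, ht, rfl⟩
  · exact Or.inl ⟨x, hx, rfl⟩
  · exact Or.inr ⟨t, ht, rfl⟩

lemma q_inl_eq_inr {x : K → Bool} {t : L → Bool} (h : q (Sum.inl x) = q (Sum.inr t)) :
    x = zz ∧ t = zz := by
  rcases q_eq_iff.1 h with h' | ⟨h1, h2⟩
  · exact absurd h' (by simp)
  · constructor
    · rcases h1 with h1 | h1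
      · exact Sum.inl.inj h1
      · exact absurd h1 (by simp)
    · rcases h2 with h2 | h2
      · exact absurd h2 (by simp)
      · exact Sum.inr.inj h2

lemma q_inl_inj {x x' : K → Bool} (h : (q (Sum.inl x) : GlueSpace K L) = q (Sum.inl x')) : x = x' := by
  rcases q_eq_iff.1 h with h' | ⟨h1, h2⟩
  · exact Sum.inl.inj h'
  · have hx : x = zz := by
      rcases h1 with h1 | h1
      · exact Sum.inl.inj h1
      · exact absurd h1 (by simp)
    have hx' : x' = zz := by
      rcases h2 with h2 | h2
      · exact Sum.inl.inj h2
      · exact absurd h2 (by simp)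
    rw [hx, hx']

lemma q_inr_inj {t t' : L → Bool} (h : (q (Sum.inr t) : GlueSpace K L) = q (Sum.inr t')) : t = t' := by
  rcases q_eq_iff.1 h with h' | ⟨h1, h2⟩
  · exact Sum.inr.inj h'
  · have hx : t = zz := by
      rcases h1 with h1 | h1
      · exact absurd h1 (by simp)
      · exact Sum.inr.inj h1
    have hx' : t' = zz := by
      rcases h2 with h2 | h2
      · exact absurd h2 (by simp)
      · exact Sum.inr.inj h2
    rw [hx, hx']

/-! ### The base members -/

/-- base member avoiding the glue point, K side -/
def mK (s₀ s₁ : Finset K) : Set (GlueSpace K L) := j (cyl s₀ s₁ \ {zz}) (∅ : Set (L → Bool))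

/-- base member avoiding the glue point, L side -/
def mL (t₀ t₁ : Finset L) : Set (GlueSpace K L) := j (∅ : Set (K → Bool)) (cyl t₀ t₁ \ {zz})

/-- base member containing the glue point -/
def mP (F : Finset K) (G : Finset L) : Set (GlueSpace K L) := j (cyl F ∅) (cyl G ∅)

lemma sat_mK {s₀ s₁ : Finset K} : Sat (cyl s₀ s₁ \ {zz}) (∅ : Set (L → Bool)) := by
  simp [Sat]

lemma sat_mL {t₀ t₁ : Finset L} : Sat (∅ : Set (K → Bool)) (cyl t₀ t₁ \ {zz}) := by
  simp [Sat]

lemma sat_mP {F : Finset K} {G : Finset L} : Sat (cyl F ∅) (cyl G ∅) := by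
  simp [Sat, zz_mem_cyl]

lemma isOpen_cyl_diff {α : Type u} (s₀ s₁ : Finset α) : IsOpen (cyl s₀ s₁ \ ({zz} : Set (α → Bool))) :=
  (isOpen_cyl s₀ s₁).sdiff isClosed_singleton

lemma isOpen_mK (s₀ s₁ : Finset K) : IsOpen (mK s₀ s₁ : Set (GlueSpace K L)) :=
  isOpen_j (isOpen_cyl_diff _ _) isOpen_empty sat_mK

lemma isOpen_mL (t₀ t₁ : Finset L) : IsOpen (mL t₀ t₁ : Set (GlueSpace K L)) :=
  isOpen_j isOpen_empty (isOpen_cyl_diff _ _) sat_mL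

lemma isOpen_mP (F : Finset K) (G : Finset L) : IsOpen (mP F G : Set (GlueSpace K L)) :=
  isOpen_j (isOpen_cyl _ _) (isOpen_cyl _ _) sat_mP

lemma pt_mem_mP (F : Finset K) (G : Finset L) : pt K L ∈ mP F G :=
  (pt_mem_j sat_mP).2 (zz_mem_cyl.2 rfl)

lemma pt_not_mem_mK (s₀ s₁ : Finset K) : pt K L ∉ (mK s₀ s₁ : Set (GlueSpace K L)) := by
  intro h
  have := (pt_mem_j sat_mK).1 h
  simp at this

lemma pt_not_mem_mL (t₀ t₁ : Finset L) : pt K L ∉ (mL t₀ t₁ : Set (GlueSpace K L)) := by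
  intro h
  rcases mem_j_elim h with ⟨x, hx, -⟩ | ⟨t, ht, hy⟩
  · exact hx
  · exact ht.2 (eq_pt_iff_inr.1 hy.symm)

/-- auxiliary: updates stay in cylinders -/
lemma update_mem_cyl {α : Type u} [DecidableEq α] {s₀ s₁ : Finset α} {x : α → Bool}
    (hx : x ∈ cyl s₀ s₁) {k : α} {b : Bool} (hk0 : k ∉ s₀) (hk1 : k ∉ s₁) :
    Function.update x k b ∈ cyl s₀ s₁ := by
  refine ⟨fun i hi => ?_, fun i hi => ?_⟩
  · rw [Function.update_of_ne (by rintro rfl; exact hk0 hi)]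
    exact hx.1 i hi
  · rw [Function.update_of_ne (by rintro rfl; exact hk1 hi)]
    exact hx.2 i hi

lemma ne_zz_of_true {α : Type u} {x : α → Bool} {k : α} (h : x k = true) :
    x ∉ ({zz} : Set (α → Bool)) := by
  intro h'
  rw [Set.mem_singleton_iff] at h'
  subst h'
  simp [zz] at h

/-- extraction of index constraints from a subset relation between punctured cylinders -/
lemma cyl_diff_subset_extract {α : Type u} [Infinite α] [DecidableEq α] {s₀ s₁ s₀' s₁' : Finset α}
    (hne : (cyl s₀ s₁ \ ({zz} : Set (α → Bool))).Nonempty)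
    (h : cyl s₀ s₁ \ {zz} ⊆ cyl s₀' s₁') : s₀' ⊆ s₀ ∪ s₁ ∧ s₁' ⊆ s₀ ∪ s₁ := by
  classical
  obtain ⟨x, hx, hxz⟩ := hne
  constructor
  · intro k hk
    by_contra hknot
    have hk0 : k ∉ s₀ := fun h' => hknot (Finset.mem_union_left _ h')
    have hk1 : k ∉ s₁ := fun h' => hknot (Finset.mem_union_right _ h')
    have hmem : Function.update x k true ∈ cyl s₀ s₁ := update_mem_cyl hx hk0 hk1
    have hz : Function.update x k true ∉ ({zz} : Set (α → Bool)) :=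
      ne_zz_of_true (by rw [Function.update_self])
    have := (h ⟨hmem, hz⟩).1 k hk
    rw [Function.update_self] at this
    exact absurd this (by decide)
  · intro k hk
    by_contra hknot
    have hk0 : k ∉ s₀ := fun h' => hknot (Finset.mem_union_left _ h')
    have hk1 : k ∉ s₁ := fun h' => hknot (Finset.mem_union_right _ h')
    obtain ⟨k', hk'⟩ := Infinite.exists_notMem_finset (insert k (s₀ ∪ s₁))
    have hk'k : k' ≠ k := fun h' => hk' (h' ▸ Finset.mem_insert_self _ _)
    have hk'0 : k' ∉ s₀ := fun h' =>
      hk' (Finset.mem_insert_of_mem (Finset.mem_union_left _ h'))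
    have hk'1 : k' ∉ s₁ := fun h' =>
      hk' (Finset.mem_insert_of_mem (Finset.mem_union_right _ h'))
    have hmem : Function.update (Function.update x k false) k' true ∈ cyl s₀ s₁ :=
      update_mem_cyl (update_mem_cyl hx hk0 hk1) hk'0 hk'1
    have hz : Function.update (Function.update x k false) k' true ∉ ({zz} : Set (α → Bool)) :=
      ne_zz_of_true (by rw [Function.update_self])
    have := (h ⟨hmem, hz⟩).2 k hk
    rw [Function.update_of_ne hk'k.symm, Function.update_self] at this
    exact Bool.false_ne_true this

lemma NF_subset_extract {α : Type u} {F F' : Finset α}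
    (h : cyl F ∅ ⊆ cyl F' (∅ : Finset α)) : F' ⊆ F := by
  classical
  intro k hk
  by_contra hknot
  have : ind {k} ∈ cyl F ∅ := ind_mem_cyl (fun i hi => by
    simp only [Finset.mem_singleton]; rintro rfl; exact hknot hi) (by simp)
  have := (h this).1 k hk
  simp [ind] at this

/-! ### The base family -/

open scoped Classical in
/-- the base family, parametrized by a family `C` of finsets controlling the
neighbourhoods of the glue point -/
def bas (C : L → Set (Finset K)) : Set (Set (GlueSpace K L)) :=
  {v | ((∃ s₀ s₁ : Finset K, v = mK s₀ s₁) ∨ (∃ t₀ t₁ : Finset L, v = mL t₀ t₁) ∨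
    (∃ (i : L) (S : Finset L) (F : Finset K), F ∈ C i ∧ v = mP F (insert i S))) ∧ v ≠ ∅}

theorem isBasis_bas (C : L → Set (Finset K)) (hcov : ∀ F : Finset K, ∃ i, F ∈ C i) :
    IsTopologicalBasis (bas C) := by
  classical
  apply isTopologicalBasis_of_isOpen_of_nhds
  · rintro u ⟨(⟨s₀, s₁, rfl⟩ | ⟨t₀, t₁, rfl⟩ | ⟨i, S, F, hF, rfl⟩), -⟩
    · exact isOpen_mK s₀ s₁
    · exact isOpen_mL t₀ t₁
    · exact isOpen_mP _ _
  · intro a W haW hW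
    have hWj : W = j (Sum.inl ⁻¹' (q ⁻¹' W)) (Sum.inr ⁻¹' (q ⁻¹' W)) := open_eq_j hW
    set A : Set (K → Bool) := Sum.inl ⁻¹' (q ⁻¹' W) with hA_def
    set B : Set (L → Bool) := Sum.inr ⁻¹' (q ⁻¹' W) with hB_def
    have hsat : Sat A B := sat_traces
    have hqW : IsOpen (q ⁻¹' W) := isOpen_glue_iff.1 hW
    have hA : IsOpen A := (isOpen_sum_iff.1 hqW).1
    have hB : IsOpen B := (isOpen_sum_iff.1 hqW).2
    rcases pt_mem_cases (y := a) with ⟨x, rfl⟩ | ⟨t, rfl⟩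
    · by_cases hx : x = zz
      · subst hx
        have hzA : zz ∈ A := haW
        have hzB : zz ∈ B := hsat.1 hzA
        obtain ⟨F₀, hF₀⟩ := exists_zcyl_subset hA hzA
        obtain ⟨G₀, hG₀⟩ := exists_zcyl_subset hB hzB
        obtain ⟨i, hi⟩ := hcov F₀
        refine ⟨mP F₀ (insert i G₀), ⟨Or.inr (Or.inr ⟨i, G₀, F₀, hi, rfl⟩), ?_⟩, ?_, ?_⟩
        · exact Set.nonempty_iff_ne_empty.1 ⟨pt K L, pt_mem_mP _ _⟩
        · exact pt_mem_mP _ _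
        · rw [hWj]
          exact (j_subset_j_iff hsat).2
            ⟨hF₀, (cyl_anti (Finset.subset_insert _ _)).trans hG₀⟩
      · have hxA : x ∈ A := haW
        obtain ⟨s₀, s₁, hmem, hsub⟩ := exists_cyl_subset hA hxA
        have hamem : q (Sum.inl x) ∈ (mK s₀ s₁ : Set (GlueSpace K L)) :=
          inl_mem_j ⟨hmem, fun h => hx (Set.mem_singleton_iff.1 h)⟩
        refine ⟨mK s₀ s₁, ⟨Or.inl ⟨s₀, s₁, rfl⟩, ?_⟩, hamem, ?_⟩
        · exact Set.nonempty_iff_ne_empty.1 ⟨_, hamem⟩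
        · rw [hWj]
          exact (j_subset_j_iff hsat).2
            ⟨Set.Subset.trans Set.diff_subset hsub, Set.empty_subset _⟩
    · by_cases ht : t = zz
      · subst ht
        have hpt : (q (Sum.inr (zz : L → Bool)) : GlueSpace K L) = pt K L := by
          rw [pt, q_eq_iff]
          exact Or.inr ⟨Or.inr rfl, Or.inl rfl⟩
        rw [hpt] at haW ⊢
        have hzA : zz ∈ A := (pt_mem_j hsat).1 (hWj ▸ haW)
        have hzB : zz ∈ B := hsat.1 hzA
        obtain ⟨F₀, hF₀⟩ := exists_zcyl_subset hA hzA
        obtain ⟨G₀, hG₀⟩ := exists_zcyl_subset hB hzB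
        obtain ⟨i, hi⟩ := hcov F₀
        refine ⟨mP F₀ (insert i G₀), ⟨Or.inr (Or.inr ⟨i, G₀, F₀, hi, rfl⟩), ?_⟩, ?_, ?_⟩
        · exact Set.nonempty_iff_ne_empty.1 ⟨pt K L, pt_mem_mP _ _⟩
        · exact pt_mem_mP _ _
        · rw [hWj]
          exact (j_subset_j_iff hsat).2
            ⟨hF₀, (cyl_anti (Finset.subset_insert _ _)).trans hG₀⟩
      · have htB : t ∈ B := haW
        obtain ⟨t₀, t₁, hmem, hsub⟩ := exists_cyl_subset hB htB
        have hamem : q (Sum.inr t) ∈ (mL t₀ t₁ : Set (GlueSpace K L)) :=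
          inr_mem_j ⟨hmem, fun h => ht (Set.mem_singleton_iff.1 h)⟩
        refine ⟨mL t₀ t₁, ⟨Or.inr (Or.inl ⟨t₀, t₁, rfl⟩), ?_⟩, hamem, ?_⟩
        · exact Set.nonempty_iff_ne_empty.1 ⟨_, hamem⟩
        · rw [hWj]
          exact (j_subset_j_iff hsat).2
            ⟨Set.empty_subset _, Set.Subset.trans Set.diff_subset hsub⟩

/-! ### Counting -/

lemma mk_le_of_subset_range {α β : Type u} {S : Set β} {f : α → β}
    (h : S ⊆ Set.range f) : #S ≤ #α :=
  (Cardinal.mk_le_mk_of_subset h).trans Cardinal.mk_range_le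

lemma sum_lt_of_small {ι : Type u} {κ : Cardinal.{u}} (hκ : ℵ₀ ≤ κ) (f : ι → Cardinal.{u})
    (hι : #ι < κ.ord.cof) (hf : ∀ i, f i < κ) : Cardinal.sum f < κ := by
  calc Cardinal.sum f ≤ #ι * iSup f := Cardinal.sum_le_mk_mul_iSup f
  _ < κ := Cardinal.mul_lt_of_lt hκ (hι.trans_le (Ordinal.cof_ord_le κ))
      (Ordinal.iSup_lt hι hf)

section Counting

variable [Infinite K] [Infinite L]

lemma mK_nonempty_elim {s₀ s₁ : Finset K}
    (h : (mK s₀ s₁ : Set (GlueSpace K L)).Nonempty) :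
    (cyl s₀ s₁ \ ({zz} : Set (K → Bool))).Nonempty := by
  obtain ⟨y, hy⟩ := h
  rcases mem_j_elim hy with ⟨x, hx, -⟩ | ⟨t, ht, -⟩
  · exact ⟨x, hx⟩
  · exact absurd ht (Set.notMem_empty t)

lemma mL_nonempty_elim {t₀ t₁ : Finset L}
    (h : (mL t₀ t₁ : Set (GlueSpace K L)).Nonempty) :
    (cyl t₀ t₁ \ ({zz} : Set (L → Bool))).Nonempty := by
  obtain ⟨y, hy⟩ := h
  rcases mem_j_elim hy with ⟨x, hx, -⟩ | ⟨t, ht, -⟩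
  · exact absurd hx (Set.notMem_empty x)
  · exact ⟨t, ht⟩

lemma not_mK_subset_mL {s₀ s₁ : Finset K} {t₀ t₁ : Finset L}
    (hne : (mK s₀ s₁ : Set (GlueSpace K L)).Nonempty)
    (h : (mK s₀ s₁ : Set (GlueSpace K L)) ⊆ mL t₀ t₁) : False := by
  obtain ⟨x, hx, hxz⟩ := mK_nonempty_elim hne
  have := h (inl_mem_j ⟨hx, hxz⟩)
  rcases mem_j_elim this with ⟨x', hx', -⟩ | ⟨t, -, ht'⟩
  · exact absurd hx' (Set.notMem_empty x')
  · exact hxz (Set.mem_singleton_iff.2 (q_inl_eq_inr ht').1)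

lemma not_mL_subset_mK {s₀ s₁ : Finset K} {t₀ t₁ : Finset L}
    (hne : (mL t₀ t₁ : Set (GlueSpace K L)).Nonempty)
    (h : (mL t₀ t₁ : Set (GlueSpace K L)) ⊆ mK s₀ s₁) : False := by
  obtain ⟨t, ht, htz⟩ := mL_nonempty_elim hne
  have := h (inr_mem_j ⟨ht, htz⟩)
  rcases mem_j_elim this with ⟨x, -, hx'⟩ | ⟨t', ht', -⟩
  · exact htz (Set.mem_singleton_iff.2 (q_inl_eq_inr hx'.symm).2)
  · exact absurd ht' (Set.notMem_empty t')

open scoped Classical in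
lemma mK_subset_mK_extract {s₀ s₁ s₀' s₁' : Finset K}
    (hne : (mK s₀ s₁ : Set (GlueSpace K L)).Nonempty)
    (h : (mK s₀ s₁ : Set (GlueSpace K L)) ⊆ mK s₀' s₁') :
    s₀' ⊆ s₀ ∪ s₁ ∧ s₁' ⊆ s₀ ∪ s₁ :=
  cyl_diff_subset_extract (mK_nonempty_elim hne)
    (Set.Subset.trans ((j_subset_j_iff sat_mK).1 h).1 Set.diff_subset)

open scoped Classical in
lemma mL_subset_mL_extract {t₀ t₁ t₀' t₁' : Finset L}
    (hne : (mL t₀ t₁ : Set (GlueSpace K L)).Nonempty)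
    (h : (mL t₀ t₁ : Set (GlueSpace K L)) ⊆ mL t₀' t₁') :
    t₀' ⊆ t₀ ∪ t₁ ∧ t₁' ⊆ t₀ ∪ t₁ :=
  cyl_diff_subset_extract (mL_nonempty_elim hne)
    (Set.Subset.trans ((j_subset_j_iff sat_mL).1 h).2 Set.diff_subset)

open scoped Classical in
lemma mK_subset_mP_extract {s₀ s₁ : Finset K} {F : Finset K} {G : Finset L}
    (hne : (mK s₀ s₁ : Set (GlueSpace K L)).Nonempty)
    (h : (mK s₀ s₁ : Set (GlueSpace K L)) ⊆ mP F G) : F ⊆ s₀ ∪ s₁ :=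
  (cyl_diff_subset_extract (mK_nonempty_elim hne)
    ((j_subset_j_iff sat_mP).1 h).1).1

open scoped Classical in
lemma mL_subset_mP_extract {t₀ t₁ : Finset L} {F : Finset K} {G : Finset L}
    (hne : (mL t₀ t₁ : Set (GlueSpace K L)).Nonempty)
    (h : (mL t₀ t₁ : Set (GlueSpace K L)) ⊆ mP F G) : G ⊆ t₀ ∪ t₁ :=
  (cyl_diff_subset_extract (mL_nonempty_elim hne)
    ((j_subset_j_iff sat_mP).1 h).2).1

lemma mP_subset_mP_extract {F F' : Finset K} {G G' : Finset L}
    (h : (mP F G : Set (GlueSpace K L)) ⊆ mP F' G') : F' ⊆ F ∧ G' ⊆ G :=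
  ⟨NF_subset_extract ((j_subset_j_iff sat_mP).1 h).1,
   NF_subset_extract ((j_subset_j_iff sat_mP).1 h).2⟩

/-- members of the first kind above a set containing the glue point: none -/
lemma SK_empty_of_pt {u : Set (GlueSpace K L)} (hpt : pt K L ∈ u) :
    {v : Set (GlueSpace K L) | (∃ s₀ s₁ : Finset K, v = mK s₀ s₁) ∧ u ⊆ v} = ∅ := by
  ext v
  simp only [Set.mem_setOf_eq, Set.mem_empty_iff_false, iff_false, not_and]
  rintro ⟨s₀, s₁, rfl⟩ hsub
  exact pt_not_mem_mK s₀ s₁ (hsub hpt)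

lemma SL_empty_of_pt {u : Set (GlueSpace K L)} (hpt : pt K L ∈ u) :
    {v : Set (GlueSpace K L) | (∃ t₀ t₁ : Finset L, v = mL t₀ t₁) ∧ u ⊆ v} = ∅ := by
  ext v
  simp only [Set.mem_setOf_eq, Set.mem_empty_iff_false, iff_false, not_and]
  rintro ⟨t₀, t₁, rfl⟩ hsub
  exact pt_not_mem_mL t₀ t₁ (hsub hpt)

open scoped Classical in
lemma SK_finite_of_mK {s₀ s₁ : Finset K}
    (hne : (mK s₀ s₁ : Set (GlueSpace K L)).Nonempty) :
    {v : Set (GlueSpace K L) | (∃ s₀' s₁' : Finset K, v = mK s₀' s₁') ∧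
      (mK s₀ s₁ : Set (GlueSpace K L)) ⊆ v}.Finite := by
  have hsub : {v : Set (GlueSpace K L) | (∃ s₀' s₁' : Finset K, v = mK s₀' s₁') ∧
      (mK s₀ s₁ : Set (GlueSpace K L)) ⊆ v} ⊆
      (fun p : Finset K × Finset K => (mK p.1 p.2 : Set (GlueSpace K L))) ''
        {p : Finset K × Finset K | p.1 ⊆ s₀ ∪ s₁ ∧ p.2 ⊆ s₀ ∪ s₁} := by
    rintro v ⟨⟨s₀', s₁', rfl⟩, hsubv⟩
    obtain ⟨h1, h2⟩ := mK_subset_mK_extract hne hsubv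
    exact ⟨(s₀', s₁'), ⟨h1, h2⟩, rfl⟩
  refine Set.Finite.subset (Set.Finite.image _ ?_) hsub
  refine Set.Finite.subset (Set.Finite.prod ((s₀ ∪ s₁).powerset.finite_toSet)
    ((s₀ ∪ s₁).powerset.finite_toSet)) ?_
  rintro ⟨a, b⟩ ⟨h1, h2⟩
  exact ⟨Finset.mem_powerset.2 h1, Finset.mem_powerset.2 h2⟩

open scoped Classical in
lemma SL_finite_of_mL {t₀ t₁ : Finset L}
    (hne : (mL t₀ t₁ : Set (GlueSpace K L)).Nonempty) :
    {v : Set (GlueSpace K L) | (∃ t₀' t₁' : Finset L, v = mL t₀' t₁') ∧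
      (mL t₀ t₁ : Set (GlueSpace K L)) ⊆ v}.Finite := by
  have hsub : {v : Set (GlueSpace K L) | (∃ t₀' t₁' : Finset L, v = mL t₀' t₁') ∧
      (mL t₀ t₁ : Set (GlueSpace K L)) ⊆ v} ⊆
      (fun p : Finset L × Finset L => (mL p.1 p.2 : Set (GlueSpace K L))) ''
        {p : Finset L × Finset L | p.1 ⊆ t₀ ∪ t₁ ∧ p.2 ⊆ t₀ ∪ t₁} := by
    rintro v ⟨⟨t₀', t₁', rfl⟩, hsubv⟩
    obtain ⟨h1, h2⟩ := mL_subset_mL_extract hne hsubv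
    exact ⟨(t₀', t₁'), ⟨h1, h2⟩, rfl⟩
  refine Set.Finite.subset (Set.Finite.image _ ?_) hsub
  refine Set.Finite.subset (Set.Finite.prod ((t₀ ∪ t₁).powerset.finite_toSet)
    ((t₀ ∪ t₁).powerset.finite_toSet)) ?_
  rintro ⟨a, b⟩ ⟨h1, h2⟩
  exact ⟨Finset.mem_powerset.2 h1, Finset.mem_powerset.2 h2⟩

open scoped Classical in
lemma SP_finite_of_mP (C : L → Set (Finset K)) {F : Finset K} {G : Finset L} :
    {v : Set (GlueSpace K L) | (∃ (i : L) (S : Finset L) (F' : Finset K),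
      F' ∈ C i ∧ v = mP F' (insert i S)) ∧ (mP F G : Set (GlueSpace K L)) ⊆ v}.Finite := by
  have hsub : {v : Set (GlueSpace K L) | (∃ (i : L) (S : Finset L) (F' : Finset K),
      F' ∈ C i ∧ v = mP F' (insert i S)) ∧ (mP F G : Set (GlueSpace K L)) ⊆ v} ⊆
      (fun p : Finset K × Finset L => (mP p.1 p.2 : Set (GlueSpace K L))) ''
        {p : Finset K × Finset L | p.1 ⊆ F ∧ p.2 ⊆ G} := by
    rintro v ⟨⟨i, S, F', hF', rfl⟩, hsubv⟩
    obtain ⟨h1, h2⟩ := mP_subset_mP_extract hsubv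
    exact ⟨(F', insert i S), ⟨h1, h2⟩, rfl⟩
  refine Set.Finite.subset (Set.Finite.image _ ?_) hsub
  refine Set.Finite.subset (Set.Finite.prod (F.powerset.finite_toSet)
    (G.powerset.finite_toSet)) ?_
  rintro ⟨a, b⟩ ⟨h1, h2⟩
  exact ⟨Finset.mem_powerset.2 h1, Finset.mem_powerset.2 h2⟩

open scoped Classical in
lemma SP_small_of_mK (C : L → Set (Finset K)) {s₀ s₁ : Finset K}
    (hne : (mK s₀ s₁ : Set (GlueSpace K L)).Nonempty) :
    #{v : Set (GlueSpace K L) | (∃ (i : L) (S : Finset L) (F' : Finset K),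
      F' ∈ C i ∧ v = mP F' (insert i S)) ∧ (mK s₀ s₁ : Set (GlueSpace K L)) ⊆ v} ≤ #L := by
  have hL : ℵ₀ ≤ #L := (Cardinal.infinite_iff (α := L)).1 inferInstance
  have hsub : {v : Set (GlueSpace K L) | (∃ (i : L) (S : Finset L) (F' : Finset K),
      F' ∈ C i ∧ v = mP F' (insert i S)) ∧ (mK s₀ s₁ : Set (GlueSpace K L)) ⊆ v} ⊆
      Set.range (fun p : (L × Finset L) × ((s₀ ∪ s₁).powerset : Finset (Finset K)) =>
        (mP (p.2 : Finset K) (insert p.1.1 p.1.2) : Set (GlueSpace K L))) := by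
    rintro v ⟨⟨i, S, F', hF', rfl⟩, hsubv⟩
    exact ⟨((i, S), ⟨F', Finset.mem_powerset.2 (mK_subset_mP_extract hne hsubv)⟩), rfl⟩
  refine (mk_le_of_subset_range hsub).trans ?_
  simp only [Cardinal.mk_prod, Cardinal.lift_id, mk_finset_of_infinite]
  have h1 : #L * #L = #L := Cardinal.mul_eq_self hL
  have h2 : #((s₀ ∪ s₁).powerset : Finset (Finset K)) ≤ #L :=
    le_trans (le_of_lt (Cardinal.lt_aleph0_of_finite _)) hL
  calc #L * #L * #((s₀ ∪ s₁).powerset : Finset (Finset K)) ≤ #L * #L * #L := by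
        exact mul_le_mul' (le_refl _) h2
  _ = #L := by rw [h1, h1]

open scoped Classical in
lemma SP_small_of_mL (C : L → Set (Finset K)) (hsm : ∀ i, #(C i) < #K) {t₀ t₁ : Finset L}
    (hne : (mL t₀ t₁ : Set (GlueSpace K L)).Nonempty) :
    #{v : Set (GlueSpace K L) | (∃ (i : L) (S : Finset L) (F' : Finset K),
      F' ∈ C i ∧ v = mP F' (insert i S)) ∧ (mL t₀ t₁ : Set (GlueSpace K L)) ⊆ v} < #K := by
  have hK : ℵ₀ ≤ #K := (Cardinal.infinite_iff (α := K)).1 inferInstance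
  have hsub : {v : Set (GlueSpace K L) | (∃ (i : L) (S : Finset L) (F' : Finset K),
      F' ∈ C i ∧ v = mP F' (insert i S)) ∧ (mL t₀ t₁ : Set (GlueSpace K L)) ⊆ v} ⊆
      Set.range (fun p : ((Σ i : ((t₀ ∪ t₁) : Finset L), ((C i) : Set (Finset K))) ×
          (((t₀ ∪ t₁).powerset : Finset (Finset L)))) =>
        (mP (p.1.2 : Finset K) (insert (p.1.1 : L) (p.2 : Finset L)) : Set (GlueSpace K L))) := by
    rintro v ⟨⟨i, S, F', hF', rfl⟩, hsubv⟩
    have hins : insert i S ⊆ t₀ ∪ t₁ := mL_subset_mP_extract hne hsubv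
    have hi : i ∈ t₀ ∪ t₁ := hins (Finset.mem_insert_self _ _)
    have hS : S ⊆ t₀ ∪ t₁ := (Finset.insert_subset_iff.1 hins).2
    exact ⟨(⟨⟨i, hi⟩, ⟨F', hF'⟩⟩, ⟨S, Finset.mem_powerset.2 hS⟩), rfl⟩
  refine lt_of_le_of_lt (mk_le_of_subset_range hsub) ?_
  simp only [Cardinal.mk_prod, Cardinal.lift_id]
  apply Cardinal.mul_lt_of_lt hK
  · rw [Cardinal.mk_sigma]
    apply sum_lt_of_small hK _ ?_ (fun i => hsm _)
    · exact lt_of_lt_of_le (Cardinal.lt_aleph0_of_finite _)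
        ((Ordinal.aleph0_le_cof).2 (Cardinal.isSuccLimit_ord hK))
  · exact lt_of_lt_of_le (Cardinal.lt_aleph0_of_finite _) hK

end Counting

section Assemble

variable [Infinite K] [Infinite L]

open scoped Classical in
lemma SL_empty_of_mK {s₀ s₁ : Finset K}
    (hne : (mK s₀ s₁ : Set (GlueSpace K L)).Nonempty) :
    {v : Set (GlueSpace K L) | (∃ t₀ t₁ : Finset L, v = mL t₀ t₁) ∧
      (mK s₀ s₁ : Set (GlueSpace K L)) ⊆ v} = ∅ := by
  ext v
  simp only [Set.mem_setOf_eq, Set.mem_empty_iff_false, iff_false, not_and]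
  rintro ⟨t₀, t₁, rfl⟩ hsub
  exact not_mK_subset_mL hne hsub

open scoped Classical in
lemma SK_empty_of_mL {t₀ t₁ : Finset L}
    (hne : (mL t₀ t₁ : Set (GlueSpace K L)).Nonempty) :
    {v : Set (GlueSpace K L) | (∃ s₀ s₁ : Finset K, v = mK s₀ s₁) ∧
      (mL t₀ t₁ : Set (GlueSpace K L)) ⊆ v} = ∅ := by
  ext v
  simp only [Set.mem_setOf_eq, Set.mem_empty_iff_false, iff_false, not_and]
  rintro ⟨s₀, s₁, rfl⟩ hsub
  exact not_mL_subset_mK hne hsub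

open scoped Classical in
theorem count_lt_of_mem_bas (C : L → Set (Finset K)) (hlt : #L < #K) (hsm : ∀ i, #(C i) < #K)
    {u : Set (GlueSpace K L)} (hu : u ∈ bas C) :
    #{v : Set (GlueSpace K L) // v ∈ bas C ∧ u ⊂ v} < #K := by
  have hK : ℵ₀ ≤ #K := (Cardinal.infinite_iff (α := K)).1 inferInstance
  have hL : ℵ₀ ≤ #L := (Cardinal.infinite_iff (α := L)).1 inferInstance
  obtain ⟨hform, hne⟩ := hu
  have hne' : u.Nonempty := Set.nonempty_iff_ne_empty.2 hne
  set SK := {v : Set (GlueSpace K L) | (∃ s₀ s₁ : Finset K, v = mK s₀ s₁) ∧ u ⊆ v} with hSK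
  set SL := {v : Set (GlueSpace K L) | (∃ t₀ t₁ : Finset L, v = mL t₀ t₁) ∧ u ⊆ v} with hSL
  set SP := {v : Set (GlueSpace K L) | (∃ (i : L) (S : Finset L) (F' : Finset K),
    F' ∈ C i ∧ v = mP F' (insert i S)) ∧ u ⊆ v} with hSP
  have hsplit : {v : Set (GlueSpace K L) | v ∈ bas C ∧ u ⊂ v} ⊆ SK ∪ (SL ∪ SP) := by
    rintro v ⟨⟨hf, -⟩, hss⟩
    rcases hf with h | h | h
    · exact Or.inl ⟨h, hss.1⟩
    · exact Or.inr (Or.inl ⟨h, hss.1⟩)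
    · exact Or.inr (Or.inr ⟨h, hss.1⟩)
  have hmain : #{v : Set (GlueSpace K L) // v ∈ bas C ∧ u ⊂ v} ≤ #SK + (#SL + #SP) := by
    refine le_trans (Cardinal.mk_le_mk_of_subset hsplit) ?_
    refine le_trans (Cardinal.mk_union_le _ _) ?_
    exact add_le_add_right (Cardinal.mk_union_le _ _) _
  have hKlt : #SK < #K ∧ #SL < #K ∧ #SP < #K := by
    rcases hform with ⟨s₀, s₁, rfl⟩ | ⟨t₀, t₁, rfl⟩ | ⟨i, S, F, hF, rfl⟩
    · refine ⟨?_, ?_, ?_⟩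
      · exact lt_of_lt_of_le (Set.Finite.lt_aleph0 (SK_finite_of_mK hne')) hK
      · rw [hSL, SL_empty_of_mK hne']
        simpa using Cardinal.aleph0_pos.trans_le hK
      · exact lt_of_le_of_lt (SP_small_of_mK C hne') hlt
    · refine ⟨?_, ?_, ?_⟩
      · rw [hSK, SK_empty_of_mL hne']
        simpa using Cardinal.aleph0_pos.trans_le hK
      · exact lt_of_lt_of_le (Set.Finite.lt_aleph0 (SL_finite_of_mL hne')) hK
      · exact SP_small_of_mL C hsm hne'
    · refine ⟨?_, ?_, ?_⟩
      · rw [hSK, SK_empty_of_pt (pt_mem_mP _ _)]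
        simpa using Cardinal.aleph0_pos.trans_le hK
      · rw [hSL, SL_empty_of_pt (pt_mem_mP _ _)]
        simpa using Cardinal.aleph0_pos.trans_le hK
      · exact lt_of_lt_of_le (Set.Finite.lt_aleph0 (SP_finite_of_mP C)) hK
  exact lt_of_le_of_lt hmain (Cardinal.add_lt_of_lt hK hKlt.1
    (Cardinal.add_lt_of_lt hK hKlt.2.1 hKlt.2.2))

open scoped Classical in
theorem mk_bas_le (C : L → Set (Finset K)) (hlt' : #L ≤ #K) :
    #(bas C : Set (Set (GlueSpace K L))) ≤ #K := by
  have hK : ℵ₀ ≤ #K := (Cardinal.infinite_iff (α := K)).1 inferInstance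
  have hL : ℵ₀ ≤ #L := (Cardinal.infinite_iff (α := L)).1 inferInstance
  have hsub : (bas C) ⊆ Set.range
      (fun p : (Finset K × Finset K) ⊕ ((Finset L × Finset L) ⊕ ((L × Finset L) × Finset K)) =>
        Sum.elim (fun p : Finset K × Finset K => (mK p.1 p.2 : Set (GlueSpace K L)))
          (Sum.elim (fun p : Finset L × Finset L => (mL p.1 p.2 : Set (GlueSpace K L)))
            (fun p : (L × Finset L) × Finset K => (mP p.2 (insert p.1.1 p.1.2) :
              Set (GlueSpace K L)))) p) := by
    rintro v ⟨(⟨s₀, s₁, rfl⟩ | ⟨t₀, t₁, rfl⟩ | ⟨i, S, F, hF, rfl⟩), -⟩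
    · exact ⟨Sum.inl (s₀, s₁), rfl⟩
    · exact ⟨Sum.inr (Sum.inl (t₀, t₁)), rfl⟩
    · exact ⟨Sum.inr (Sum.inr ((i, S), F)), rfl⟩
  refine (mk_le_of_subset_range hsub).trans ?_
  simp only [Cardinal.mk_sum, Cardinal.mk_prod, Cardinal.lift_id, mk_finset_of_infinite]
  have hKK : #K * #K = #K := Cardinal.mul_eq_self hK
  have hLL : #L * #L = #L := Cardinal.mul_eq_self hL
  have hLK : #L * #K = #K := by
    rw [Cardinal.mul_eq_max hL hK, max_eq_right hlt']
  rw [hKK, hLL, hLK, Cardinal.add_eq_max hL, max_eq_right hlt', Cardinal.add_eq_self hK]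

end Assemble

/-! ### Lower bounds -/

section Lower

variable [Infinite K] [Infinite L]

lemma cyl_weaken {α : Type u} (s₀ s₁ : Finset α) : cyl s₀ s₁ ⊆ cyl s₀ ∅ :=
  fun x hx => ⟨hx.1, by simp⟩

lemma inr_zz_eq_pt : (q (Sum.inr (zz : L → Bool)) : GlueSpace K L) = pt K L := by
  rw [pt, q_eq_iff]
  exact Or.inr ⟨Or.inr rfl, Or.inl rfl⟩

/-- the character of the glue point is at least `#K` -/
theorem mk_basep_not_lt (hlt : #L < #K) {B : Set (Set (GlueSpace K L))}
    (hB : IsTopologicalBasis B)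
    (h : #{v : Set (GlueSpace K L) // v ∈ B ∧ pt K L ∈ v} < #K) : False := by
  classical
  have hK : ℵ₀ ≤ #K := (Cardinal.infinite_iff (α := K)).1 inferInstance
  have hL : ℵ₀ ≤ #L := (Cardinal.infinite_iff (α := L)).1 inferInstance
  have haK : ℵ₀ < #K := lt_of_le_of_lt hL hlt
  set P := {v : Set (GlueSpace K L) | v ∈ B ∧ pt K L ∈ v} with hP
  have hFex : ∀ v : ↥P, ∃ F : Finset K, cyl F ∅ ⊆ Sum.inl ⁻¹' (q ⁻¹' (v : Set (GlueSpace K L))) := by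
    intro v
    have hopen : IsOpen (v : Set (GlueSpace K L)) := hB.isOpen v.2.1
    have hA : IsOpen (Sum.inl ⁻¹' (q ⁻¹' (v : Set (GlueSpace K L)))) :=
      (isOpen_sum_iff.1 (isOpen_glue_iff.1 hopen)).1
    have hz : zz ∈ Sum.inl ⁻¹' (q ⁻¹' (v : Set (GlueSpace K L))) := v.2.2
    exact exists_zcyl_subset hA hz
  choose Fv hFv using hFex
  have hT : #(⋃ v : ↥P, (Fv v : Set K)) < #K := by
    refine lt_of_le_of_lt (Cardinal.mk_iUnion_le_sum_mk) ?_
    refine lt_of_le_of_lt (Cardinal.sum_le_sum _ (fun _ => ℵ₀)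
      (fun v => le_of_lt (Set.Finite.lt_aleph0 (Fv v).finite_toSet))) ?_
    rw [Cardinal.sum_const, Cardinal.lift_id, Cardinal.lift_id]
    exact Cardinal.mul_lt_of_lt hK h haK
  have hTne : ∃ k : K, k ∉ ⋃ v : ↥P, (Fv v : Set K) := by
    by_contra hc
    push_neg at hc
    have : (⋃ v : ↥P, (Fv v : Set K)) = Set.univ := Set.eq_univ_of_forall hc
    rw [this, Cardinal.mk_univ] at hT
    exact lt_irrefl _ hT
  obtain ⟨k, hk⟩ := hTne
  have hsat : Sat (cyl {k} ∅ : Set (K → Bool)) (Set.univ : Set (L → Bool)) := by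
    simp [Sat, zz_mem_cyl]
  have hWopen : IsOpen (j (cyl {k} ∅) (Set.univ : Set (L → Bool))) :=
    isOpen_j (isOpen_cyl _ _) isOpen_univ hsat
  have hptW : pt K L ∈ j (cyl {k} ∅) (Set.univ : Set (L → Bool)) :=
    (pt_mem_j hsat).2 (zz_mem_cyl.2 rfl)
  obtain ⟨v, hvB, hptv, hvW⟩ := hB.exists_subset_of_mem_open hptW hWopen
  set v' : ↥P := (⟨v, hvB, hptv⟩ : ↥P) with hv'
  have h2 : Sum.inl ⁻¹' (q ⁻¹' v) ⊆ cyl {k} ∅ := by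
    intro x hx
    exact (mem_j_inl hsat).1 (hvW hx)
  have hkF : k ∉ Fv v' := fun hmem => hk (Set.mem_iUnion.2 ⟨v', hmem⟩)
  have hxmem : ind {k} ∈ cyl (Fv v') ∅ := by
    refine ind_mem_cyl (fun i hi => ?_) (by simp)
    simp only [Finset.mem_singleton]
    rintro rfl
    exact hkF hi
  have := (h2 (hFv v' hxmem)).1 k (Finset.mem_singleton_self k)
  simp [ind] at this

/-- the key lower-bound argument -/
theorem lower_bound (hlt : #L < #K) {B : Set (Set (GlueSpace K L))}
    (hB : IsTopologicalBasis B) {c : Cardinal.{u}}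
    (hcount : ∀ u ∈ B, #{v : Set (GlueSpace K L) // v ∈ B ∧ u ⊂ v} < c)
    (hsum : ∀ f : Finset L → Cardinal.{u}, (∀ G, f G < c) → Cardinal.sum f < #K) :
    False := by
  classical
  set P := {v : Set (GlueSpace K L) | v ∈ B ∧ pt K L ∈ v} with hP
  have hGex : ∀ v : ↥P, ∃ G : Finset L,
      cyl G ∅ ⊆ Sum.inr ⁻¹' (q ⁻¹' (v : Set (GlueSpace K L))) := by
    intro v
    have hopen : IsOpen (v : Set (GlueSpace K L)) := hB.isOpen v.2.1
    have hBop : IsOpen (Sum.inr ⁻¹' (q ⁻¹' (v : Set (GlueSpace K L)))) :=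
      (isOpen_sum_iff.1 (isOpen_glue_iff.1 hopen)).2
    have hz : zz ∈ Sum.inr ⁻¹' (q ⁻¹' (v : Set (GlueSpace K L))) := by
      have := v.2.2
      rw [← inr_zz_eq_pt] at this
      exact this
    exact exists_zcyl_subset hBop hz
  choose Gv hGv using hGex
  by_cases hall : ∀ G : Finset L, #{w : ↥P // Gv w = G} < c
  · refine mk_basep_not_lt hlt hB ?_
    calc #↥P = Cardinal.sum (fun G : Finset L => #{w : ↥P // Gv w = G}) := by
          rw [← Cardinal.mk_sigma]
          exact (Cardinal.mk_congr (Equiv.sigmaFiberEquiv Gv)).symm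
    _ < #K := hsum _ hall
  · push_neg at hall
    obtain ⟨G₀, hG₀⟩ := hall
    obtain ⟨l₀, hl₀⟩ := Infinite.exists_notMem_finset G₀
    have hyW : (q (Sum.inr (ind {l₀})) : GlueSpace K L) ∈ mL G₀ {l₀} := by
      refine inr_mem_j ⟨ind_mem_cyl (fun i hi => ?_) (Finset.Subset.refl _), ?_⟩
      · simp only [Finset.mem_singleton]
        rintro rfl
        exact hl₀ hi
      · exact ne_zz_of_true (k := l₀) (by simp [ind])
    obtain ⟨u, huB, hyu, huW⟩ := hB.exists_subset_of_mem_open hyW (isOpen_mL _ _)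
    have hptu : pt K L ∉ u := fun h => pt_not_mem_mL G₀ {l₀} (huW h)
    have hsubv : ∀ w : {w : ↥P // Gv w = G₀}, u ⊂ (w.1.1 : Set (GlueSpace K L)) := by
      intro w
      have hsub : u ⊆ w.1.1 := by
        refine huW.trans (j_subset_iff.2 ⟨fun x hx => absurd hx (Set.notMem_empty x),
          fun t ht => ?_⟩)
        have ht' : t ∈ cyl (Gv w.1) ∅ := by
          rw [w.2]
          exact cyl_weaken _ _ ht.1
        exact hGv w.1 ht'
      refine Set.ssubset_iff_of_subset hsub |>.2 ⟨pt K L, w.1.2.2, hptu⟩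
    have hle : c ≤ #{v' : Set (GlueSpace K L) // v' ∈ B ∧ u ⊂ v'} := by
      refine hG₀.trans (Cardinal.mk_le_of_injective
        (f := fun w : {w : ↥P // Gv w = G₀} =>
          (⟨w.1.1, w.1.2.1, hsubv w⟩ : {v' : Set (GlueSpace K L) // v' ∈ B ∧ u ⊂ v'})) ?_)
      intro w w' hww
      have := Subtype.ext_iff.1 hww
      exact Subtype.ext (Subtype.ext this)
    exact absurd hle (not_le.2 (hcount u huB))

end Lower

/-! ### The cofinal family -/

theorem exists_C [Infinite K] [Infinite L] (hcof : (#K).ord.cof ≤ #L) :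
    ∃ C : L → Set (Finset K), (∀ i, #(C i) < #K) ∧ (∀ F : Finset K, ∃ i, F ∈ C i) := by
  classical
  have hK : ℵ₀ ≤ #K := (Cardinal.infinite_iff (α := K)).1 inferInstance
  have h1 : #(Finset K) = #((#K).ord.ToType) := by
    rw [mk_finset_of_infinite, Cardinal.mk_toType, Cardinal.card_ord]
  obtain ⟨E⟩ := Cardinal.eq.1 h1
  obtain ⟨S, hSub, hScard⟩ := Order.exists_cof_eq ((#K).ord.ToType)
  have hSle : #S ≤ #L := by
    rw [hScard, Ordinal.cof_toType]
    exact hcof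
  have hordne : (#K).ord ≠ 0 := by
    intro h
    have := congrArg Ordinal.card h
    rw [Cardinal.card_ord] at this
    simp only [Ordinal.card_zero] at this
    exact Cardinal.mk_ne_zero K this
  have htyne : Nonempty ((#K).ord.ToType) := Ordinal.nonempty_toType_iff.2 hordne
  obtain ⟨a⟩ := htyne
  obtain ⟨b, hbS, -⟩ := hSub a
  have hSne : Nonempty ↥S := ⟨⟨b, hbS⟩⟩
  obtain ⟨emb⟩ := hSle
  have hgsurj : Function.Surjective (Function.invFun emb) :=
    Function.invFun_surjective emb.injective
  refine ⟨fun i => {F : Finset K | E F ≤ ((Function.invFun emb i : ↥S) : (#K).ord.ToType)},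
    ?_, ?_⟩
  · intro i
    set x : (#K).ord.ToType := ((Function.invFun emb i : ↥S) : (#K).ord.ToType)
    have hinj : Function.Injective
        (fun F : {F : Finset K // E F ≤ x} => (⟨E F.1, F.2⟩ : ↥(Set.Iic x))) := by
      intro F F' h
      have := Subtype.ext_iff.1 h
      exact Subtype.ext (E.injective this)
    refine lt_of_le_of_lt (Cardinal.mk_le_of_injective hinj) ?_
    have hsub : Set.Iic x ⊆ insert x (Set.Iio x) := by
      intro y hy
      rcases lt_or_eq_of_le (Set.mem_Iic.1 hy) with h | h
      · exact Set.mem_insert_of_mem _ h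
      · exact h ▸ Set.mem_insert _ _
    refine lt_of_le_of_lt (Cardinal.mk_le_mk_of_subset hsub) ?_
    refine lt_of_le_of_lt (Cardinal.mk_insert_le) ?_
    exact Cardinal.add_lt_of_lt hK (Cardinal.mk_Iio_ord_toType x)
      (lt_of_lt_of_le Cardinal.one_lt_aleph0 hK)
  · intro F
    obtain ⟨b', hb'S, hb'⟩ := hSub (E F)
    obtain ⟨i, hi⟩ := hgsurj ⟨b', hb'S⟩
    refine ⟨i, ?_⟩
    simp only [Set.mem_setOf_eq, hi]
    exact hb'

end GlueAux

open GlueAux in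
/-- Let `λ = #L < #K = κ` be infinite cardinals and let `Y` be the quotient of
`2^κ ⊕ 2^λ` identifying the two all-zero points.  If `λ < cf κ` then `Nt(Y) = κ⁺`,
and if `λ ≥ cf κ` then `Nt(Y) = κ`. -/
theorem noetherianType_glueSpace (K L : Type u) [Infinite K] [Infinite L]
    (hlt : #L < #K) :
    (#L < (#K).ord.cof → noetherianType (GlueSpace K L) = Order.succ #K) ∧
    ((#K).ord.cof ≤ #L → noetherianType (GlueSpace K L) = #K) := by
  classical
  have hK : ℵ₀ ≤ #K := (Cardinal.infinite_iff (α := K)).1 inferInstance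
  have hL : ℵ₀ ≤ #L := (Cardinal.infinite_iff (α := L)).1 inferInstance
  have hsucc_mem : Order.succ #K ∈ {c : Cardinal.{u} | ℵ₀ ≤ c ∧
      ∃ B : Set (Set (GlueSpace K L)), IsTopologicalBasis B ∧
      ∀ u ∈ B, #{v : Set (GlueSpace K L) // v ∈ B ∧ u ⊂ v} < c} := by
    refine ⟨hK.trans (Order.le_succ _), bas (fun _ => Set.univ),
      isBasis_bas _ (fun F => ⟨Classical.arbitrary L, trivial⟩), ?_⟩
    intro u hu
    refine lt_of_le_of_lt ?_ (Order.lt_succ (#K))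
    exact le_trans (Cardinal.mk_le_mk_of_subset (fun v hv => hv.1))
      (mk_bas_le _ hlt.le)
  constructor
  · intro hcof
    apply le_antisymm
    · exact csInf_le' hsucc_mem
    · refine le_csInf ⟨_, hsucc_mem⟩ ?_
      rintro c ⟨hc0, B, hBbasis, hcount⟩
      rw [Order.succ_le_iff]
      by_contra hck
      push_neg at hck
      refine lower_bound hlt hBbasis hcount ?_
      intro f hf
      refine sum_lt_of_small hK f ?_ (fun G => lt_of_lt_of_le (hf G) hck)
      rw [mk_finset_of_infinite]
      exact hcof
  · intro hcof
    obtain ⟨C, hsm, hcov⟩ := exists_C (K := K) (L := L) hcof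
    have hmem : #K ∈ {c : Cardinal.{u} | ℵ₀ ≤ c ∧
        ∃ B : Set (Set (GlueSpace K L)), IsTopologicalBasis B ∧
        ∀ u ∈ B, #{v : Set (GlueSpace K L) // v ∈ B ∧ u ⊂ v} < c} :=
      ⟨hK, bas C, isBasis_bas C hcov, fun u hu => count_lt_of_mem_bas C hlt hsm hu⟩
    apply le_antisymm
    · exact csInf_le' hmem
    · refine le_csInf ⟨_, hmem⟩ ?_
      rintro c ⟨hc0, B, hBbasis, hcount⟩
      by_contra hck
      push_neg at hck
      refine lower_bound hlt hBbasis hcount ?_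
      intro f hf
      calc Cardinal.sum f ≤ Cardinal.sum (fun _ : Finset L => c) :=
            Cardinal.sum_le_sum _ _ (fun G => (hf G).le)
      _ = #(Finset L) * c := by rw [Cardinal.sum_const, Cardinal.lift_id, Cardinal.lift_id]
      _ < #K := by
          rw [mk_finset_of_infinite]
          exact Cardinal.mul_lt_of_lt hK hlt hck
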